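/- Let τ be a random variable with PMF p on 𝒟. Then for every integer l with 1 ≤ l ≤ τ̄, the autocorrelation at lag l of the channel-uncertainty impulse response satisfies E[Σ_{i=0}^{τ̄−l} ω_i(τ) · ω_{i+l}(τ)] = −Σ_{i=0}^{τ̄−l} α_i α_{i+l} p_i p_{i+l}. (Equation (16) of the paper, the value r(l).) -/

import Mathlib

open MeasureTheory ProbabilityTheory Finset

/-- Equation (16): the lag-`l` autocorrelation of the channel-uncertainty impulse response,
for `1 ≤ l ≤ τ̄`. -/
theorem autocorrelation_lag_l
    {Ω : Type*} [MeasurableSpace Ω] (μ : Measure Ω) [IsProbabilityMeasure μ]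
    (τbar : ℕ) (hτbar : 1 ≤ τbar) (α p : ℕ → ℝ)
    (hp01 : ∀ i ≤ τbar, p i ∈ Set.Icc (0 : ℝ) 1)
    (hpsum : ∑ i ∈ Finset.range (τbar + 1), p i = 1)
    (X : Ω → ℕ)
    (hXmeas : Measurable X)
    (hXrange : ∀ x, X x ≤ τbar)
    (hXpmf : ∀ i ≤ τbar, μ {x | X x = i} = ENNReal.ofReal (p i))
    (l : ℕ) (hl : 1 ≤ l) (hlτ : l ≤ τbar) :
    ∫ x, ∑ i ∈ Finset.range (τbar - l + 1),
        (α i * ((if X x = i then (1 : ℝ) else 0) - p i)) *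
          (α (i + l) * ((if X x = i + l then (1 : ℝ) else 0) - p (i + l))) ∂μ =
      -∑ i ∈ Finset.range (τbar - l + 1), α i * α (i + l) * p i * p (i + l) := by
  have hind : ∀ j : ℕ, Integrable (fun x => if X x = j then (1:ℝ) else 0) μ := by
    intro j
    have hs : MeasurableSet {x | X x = j} := hXmeas (measurableSet_singleton j)
    have h1 := (integrable_const (1:ℝ) (μ := μ)).indicator hs
    refine h1.congr (Filter.Eventually.of_forall fun x => ?_)
    simp [Set.indicator_apply, Set.mem_setOf_eq]
  have hint : ∀ j ≤ τbar, ∫ x, (if X x = j then (1:ℝ) else 0) ∂μ = p j := by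
    intro j hj
    have hs : MeasurableSet {x | X x = j} := hXmeas (measurableSet_singleton j)
    have heq : (fun x => if X x = j then (1:ℝ) else 0)
        = Set.indicator {x | X x = j} (fun _ => (1:ℝ)) := by
      ext x; simp [Set.indicator_apply, Set.mem_setOf_eq]
    rw [heq, integral_indicator_const (1:ℝ) hs, Measure.real, hXpmf j hj]
    have := (hp01 j hj).1
    simp [ENNReal.toReal_ofReal this]
  -- pointwise rewrite of each summand
  have hpt : ∀ i x,
      (α i * ((if X x = i then (1 : ℝ) else 0) - p i)) *
        (α (i + l) * ((if X x = i + l then (1 : ℝ) else 0) - p (i + l)))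
      = α i * α (i + l) * (p i * p (i + l))
        - (α i * α (i + l) * p (i + l)) * (if X x = i then (1:ℝ) else 0)
        - (α i * α (i + l) * p i) * (if X x = i + l then (1:ℝ) else 0) := by
    intro i x
    by_cases h : X x = i
    · have h2 : X x ≠ i + l := by omega
      rw [if_pos h, if_neg h2]; ring
    · by_cases h2 : X x = i + l
      · rw [if_neg h, if_pos h2]; ring
      · rw [if_neg h, if_neg h2]; ring
  have hIntg : ∀ i, Integrable (fun x =>
      α i * α (i + l) * (p i * p (i + l))
        - (α i * α (i + l) * p (i + l)) * (if X x = i then (1:ℝ) else 0)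
        - (α i * α (i + l) * p i) * (if X x = i + l then (1:ℝ) else 0)) μ := by
    intro i
    exact (((integrable_const _).sub ((hind i).const_mul _)).sub ((hind (i+l)).const_mul _))
  have hcong : ∀ x, ∑ i ∈ Finset.range (τbar - l + 1),
        (α i * ((if X x = i then (1 : ℝ) else 0) - p i)) *
          (α (i + l) * ((if X x = i + l then (1 : ℝ) else 0) - p (i + l)))
      = ∑ i ∈ Finset.range (τbar - l + 1),
        (α i * α (i + l) * (p i * p (i + l))
        - (α i * α (i + l) * p (i + l)) * (if X x = i then (1:ℝ) else 0)
        - (α i * α (i + l) * p i) * (if X x = i + l then (1:ℝ) else 0)) := by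
    intro x
    exact Finset.sum_congr rfl fun i _ => hpt i x
  rw [show (fun x => ∑ i ∈ Finset.range (τbar - l + 1),
        (α i * ((if X x = i then (1 : ℝ) else 0) - p i)) *
          (α (i + l) * ((if X x = i + l then (1 : ℝ) else 0) - p (i + l)))) =
      (fun x => ∑ i ∈ Finset.range (τbar - l + 1),
        (α i * α (i + l) * (p i * p (i + l))
        - (α i * α (i + l) * p (i + l)) * (if X x = i then (1:ℝ) else 0)
        - (α i * α (i + l) * p i) * (if X x = i + l then (1:ℝ) else 0))) from
      funext hcong]
  rw [integral_finset_sum _ (fun i _ => hIntg i)]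
  rw [← Finset.sum_neg_distrib]
  refine Finset.sum_congr rfl fun i hi => ?_
  have hi' : i ≤ τbar - l := by simpa [Nat.lt_succ_iff] using Finset.mem_range.mp hi
  have hi1 : i ≤ τbar := le_trans hi' (Nat.sub_le _ _)
  have hi2 : i + l ≤ τbar := by omega
  have e1 := integral_sub (μ := μ)
    (f := fun a => α i * α (i + l) * (p i * p (i + l))
        - α i * α (i + l) * p (i + l) * (if X a = i then (1:ℝ) else 0))
    (g := fun a => α i * α (i + l) * p i * (if X a = i + l then (1:ℝ) else 0))
    ((integrable_const _).sub ((hind i).const_mul _)) ((hind (i+l)).const_mul _)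
  have e2 := integral_sub (μ := μ)
    (f := fun _ => α i * α (i + l) * (p i * p (i + l)))
    (g := fun a => α i * α (i + l) * p (i + l) * (if X a = i then (1:ℝ) else 0))
    (integrable_const _) ((hind i).const_mul _)
  rw [e1, e2, integral_const, integral_const_mul, integral_const_mul,
     hint i hi1, hint (i+l) hi2]
  simp only [Measure.real, measure_univ, ENNReal.toReal_one, smul_eq_mul, one_mul]
  ring
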